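/- Every ordering of the 5-cycle contains every 1-ordering of the 4-path: for any five distinct elements w1,w2,w3,w4,w5 of a linear order (forming the 5-cycle with edge set E = {{w1,w2},{w2,w3},{w3,w4},{w4,w5},{w5,w1}}), and any i,l ∈ {1,2,3,4}, there exist four distinct elements x1,x2,x3,x4 among w1,…,w5 such that each of {x1,x2},{x2,x3},{x3,x4} belongs to E and x_i is the l-th smallest of x1,x2,x3,x4. -/

import Mathlib

def pathFn (s : Fin 5) (d : Bool) : Fin 4 → Fin 5 :=
  fun j => if d then s + Fin.castLE (by norm_num) j else s - Fin.castLE (by norm_num) j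

lemma pathFn_inj : ∀ s d, Function.Injective (pathFn s d) := by decide

lemma pathFn_step : ∀ s d (j : Fin 3),
    pathFn s d j.succ = pathFn s d j.castSucc + 1 ∨
    pathFn s d j.castSucc = pathFn s d j.succ + 1 := by decide

set_option synthInstance.maxSize 2000 in
set_option synthInstance.maxHeartbeats 400000 in
set_option maxHeartbeats 4000000 in
lemma aux : ∀ r0 r1 r2 r3 r4 : Fin 5,
    r0 ≠ r1 → r0 ≠ r2 → r0 ≠ r3 → r0 ≠ r4 → r1 ≠ r2 → r1 ≠ r3 → r1 ≠ r4 →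
    r2 ≠ r3 → r2 ≠ r4 → r3 ≠ r4 → ∀ i l : Fin 4,
    ∃ s d, (Finset.univ.filter fun k =>
        ![r0, r1, r2, r3, r4] (pathFn s d k) < ![r0, r1, r2, r3, r4] (pathFn s d i)).card
      = (l : ℕ) := by
  decide

/-- Every ordering of the 5-cycle contains every 1-ordering of the 4-path: for any five
distinct elements `w1, …, w5` of a linear order, forming the 5-cycle with edge set
`E = {{w1,w2},{w2,w3},{w3,w4},{w4,w5},{w5,w1}}`, and any `i, l ∈ {1,2,3,4}`, there are
four distinct elements `x 0, x 1, x 2, x 3` among `w1, …, w5` such that each of the pairs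
`{x 0, x 1}, {x 1, x 2}, {x 2, x 3}` belongs to `E` and the `(i-1)`-indexed vertex is the
`l`-th smallest of the four (exactly `l - 1` of the chosen elements are smaller). -/
theorem cycle5_contains_all_one_orderings_of_P4
    {α : Type*} [LinearOrder α] (w1 w2 w3 w4 w5 : α)
    (h12 : w1 ≠ w2) (h13 : w1 ≠ w3) (h14 : w1 ≠ w4) (h15 : w1 ≠ w5)
    (h23 : w2 ≠ w3) (h24 : w2 ≠ w4) (h25 : w2 ≠ w5)
    (h34 : w3 ≠ w4) (h35 : w3 ≠ w5) (h45 : w4 ≠ w5)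
    (i l : ℕ) (hi : 1 ≤ i) (hi' : i ≤ 4) (hl : 1 ≤ l) (hl' : l ≤ 4) :
    ∃ x : Fin 4 → α, Function.Injective x ∧
      (∀ j, x j ∈ ({w1, w2, w3, w4, w5} : Set α)) ∧
      (∀ (j : ℕ) (h : j + 1 < 4),
        s(x ⟨j, by omega⟩, x ⟨j + 1, h⟩) ∈
          ({s(w1, w2), s(w2, w3), s(w3, w4), s(w4, w5), s(w5, w1)} : Set (Sym2 α))) ∧
      (Finset.univ.filter fun k => x k < x ⟨i - 1, by omega⟩).card = l - 1 := by
  set w : Fin 5 → α := ![w1, w2, w3, w4, w5] with hw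
  have winj : Function.Injective w := by
    intro a b h
    fin_cases a <;> fin_cases b <;> simp_all [w]
  -- rank function
  have hcard5 : ∀ a : Fin 5, (Finset.univ.filter fun k => w k < w a).card < 5 := by
    intro a
    calc (Finset.univ.filter fun k => w k < w a).card
        ≤ (Finset.univ.erase a).card := by
          apply Finset.card_le_card
          intro k hk
          simp only [Finset.mem_filter] at hk
          exact Finset.mem_erase.2 ⟨fun h => absurd (h ▸ hk.2) (lt_irrefl _), Finset.mem_univ k⟩
      _ < 5 := by rw [Finset.card_erase_of_mem (Finset.mem_univ a)]; simp
  set rk : Fin 5 → Fin 5 := fun a => ⟨(Finset.univ.filter fun k => w k < w a).card, hcard5 a⟩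
    with hrk
  have hmono : ∀ a b : Fin 5, w a < w b → rk a < rk b := by
    intro a b hab
    have hss : (Finset.univ.filter fun k => w k < w a) ⊂ (Finset.univ.filter fun k => w k < w b) := by
      constructor
      · intro k hk
        simp only [Finset.mem_filter] at *
        exact ⟨hk.1, lt_trans hk.2 hab⟩
      · intro hsub
        have := hsub (Finset.mem_filter.2 ⟨Finset.mem_univ a, hab⟩)
        simp only [Finset.mem_filter] at this
        exact absurd this.2 (lt_irrefl _)
    exact Finset.card_lt_card hss
  have hlt : ∀ a b : Fin 5, rk a < rk b → w a < w b := by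
    intro a b hab
    rcases lt_trichotomy (w a) (w b) with h | h | h
    · exact h
    · exact absurd (winj h ▸ hab) (lt_irrefl _)
    · exact absurd (lt_trans (hmono _ _ h) hab) (lt_irrefl _)
  have rkinj : Function.Injective rk := by
    intro a b h
    by_contra hne
    rcases lt_trichotomy (w a) (w b) with h' | h' | h'
    · exact absurd (h ▸ hmono _ _ h') (lt_irrefl _)
    · exact hne (winj h')
    · exact absurd (h ▸ hmono _ _ h') (lt_irrefl _)
  have hv : ∀ z : Fin 5, ![rk 0, rk 1, rk 2, rk 3, rk 4] z = rk z := by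
    intro z; fin_cases z <;> rfl
  have hne : ∀ a b : Fin 5, a ≠ b → rk a ≠ rk b := fun a b h h' => h (rkinj h')
  obtain ⟨s, d, hcard⟩ := aux (rk 0) (rk 1) (rk 2) (rk 3) (rk 4)
    (hne 0 1 (by decide)) (hne 0 2 (by decide)) (hne 0 3 (by decide)) (hne 0 4 (by decide))
    (hne 1 2 (by decide)) (hne 1 3 (by decide)) (hne 1 4 (by decide))
    (hne 2 3 (by decide)) (hne 2 4 (by decide)) (hne 3 4 (by decide))
    ⟨i - 1, by omega⟩ ⟨l - 1, by omega⟩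
  simp only [hv] at hcard
  have hedge : ∀ a : Fin 5, s(w a, w (a + 1)) ∈
      ({s(w1, w2), s(w2, w3), s(w3, w4), s(w4, w5), s(w5, w1)} : Set (Sym2 α)) := by
    intro a; fin_cases a <;> simp [w]
  refine ⟨fun k => w (pathFn s d k), winj.comp (pathFn_inj s d), ?_, ?_, ?_⟩
  · intro j
    have : ∀ z : Fin 5, w z ∈ ({w1, w2, w3, w4, w5} : Set α) := by
      intro z; fin_cases z <;> simp [w]
    exact this _
  · intro j h
    have h3 : j < 3 := by omega
    have e1 : (⟨j, by omega⟩ : Fin 4) = Fin.castSucc ⟨j, h3⟩ := rfl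
    have e2 : (⟨j + 1, h⟩ : Fin 4) = Fin.succ ⟨j, h3⟩ := rfl
    show s(w (pathFn s d (Fin.castSucc ⟨j, h3⟩)), w (pathFn s d (Fin.succ ⟨j, h3⟩))) ∈ _
    rcases pathFn_step s d ⟨j, h3⟩ with hst | hst
    · rw [hst]; exact hedge _
    · rw [hst]
      rw [show (s(w (pathFn s d (Fin.succ ⟨j, h3⟩) + 1), w (pathFn s d (Fin.succ ⟨j, h3⟩))) :
          Sym2 α) = s(w (pathFn s d (Fin.succ ⟨j, h3⟩)), w (pathFn s d (Fin.succ ⟨j, h3⟩) + 1))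
        from Sym2.eq_swap]
      exact hedge _
  · rw [Finset.filter_congr
        (q := fun k => rk (pathFn s d k) < rk (pathFn s d ⟨i - 1, by omega⟩))
        (fun k _ => ⟨hmono _ _, hlt _ _⟩)]
    exact hcard
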